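/- Let (A, ρ_A) be a separable metric space, let 𝔠 be a convex subset of the space P(A) of Borel probability measures on A, and let f : 𝔠 → ℝ^d admit a flat derivative δf/δm. Fix m, m' ∈ 𝔠 and set m^ε := (1−ε)·m + ε·m' for ε ∈ [0,1]. Then the map [0,1] ∋ ε ↦ f(m^ε) is continuous on [0,1] and differentiable on (0,1) with derivative (d/dε) f(m^ε) = ∫ δf/δm(m^ε, a) d(m'−m)(a); moreover, if ε ↦ ∫ δf/δm(m^ε, a) d(m'−m)(a) is integrable over (0,1), then f(m') − f(m) = ∫₀¹ ∫ δf/δm(m^ε, a) d(m'−m)(a) dε. -/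

import Mathlib

open MeasureTheory Filter Topology

/-- The convex combination `m + ε (m' − m) = (1−ε)·m + ε·m'` of two measures. -/
noncomputable def comb {A : Type*} [MeasurableSpace A] (ε : ℝ) (m m' : Measure A) : Measure A :=
  ENNReal.ofReal (1 - ε) • m + ENNReal.ofReal ε • m'

/-- The (vector-valued) integral `∫ φ d(m' − m) := ∫ φ dm' − ∫ φ dm`. -/
noncomputable def intDiffV {A : Type*} [MeasurableSpace A] {d : ℕ}
    (φ : A → (Fin d → ℝ)) (m' m : Measure A) : Fin d → ℝ :=
  (∫ a, φ a ∂m') - ∫ a, φ a ∂m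

lemma comb_zero {A : Type*} [MeasurableSpace A] (m m' : Measure A) : comb 0 m m' = m := by
  simp [comb]

lemma comb_one {A : Type*} [MeasurableSpace A] (m m' : Measure A) : comb 1 m m' = m' := by
  simp [comb]

lemma comb_symm {A : Type*} [MeasurableSpace A] (s : ℝ) (m m' : Measure A) :
    comb s m' m = comb (1 - s) m m' := by
  simp [comb, add_comm]

lemma comb_comb_right {A : Type*} [MeasurableSpace A] {ε s : ℝ} (hε0 : 0 ≤ ε) (hε1 : ε ≤ 1)
    (hs0 : 0 ≤ s) (hs1 : s ≤ 1) (m m' : Measure A) :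
    comb s (comb ε m m') m' = comb (ε + s * (1 - ε)) m m' := by
  unfold comb
  rw [smul_add, smul_smul, smul_smul, add_assoc, ← add_smul]
  congr 1
  · rw [← ENNReal.ofReal_mul (by linarith)]
    congr 1; ring
  · congr 1
    rw [← ENNReal.ofReal_mul (by linarith), ← ENNReal.ofReal_add (by nlinarith) hs0]
    congr 1; ring

lemma comb_comb_left {A : Type*} [MeasurableSpace A] {ε s : ℝ} (hε0 : 0 ≤ ε) (hε1 : ε ≤ 1)
    (hs0 : 0 ≤ s) (hs1 : s ≤ 1) (m m' : Measure A) :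
    comb s (comb ε m m') m = comb ((1 - s) * ε) m m' := by
  unfold comb
  rw [smul_add, smul_smul, smul_smul, add_right_comm, ← add_smul]
  congr 2
  · rw [← ENNReal.ofReal_mul (by linarith), ← ENNReal.ofReal_add (by nlinarith) hs0]
    congr 1; ring
  · rw [← ENNReal.ofReal_mul (by linarith)]

lemma integral_comb {A : Type*} [MeasurableSpace A] {d : ℕ} {g : A → (Fin d → ℝ)}
    {m m' : Measure A} (hgm : Integrable g m) (hgm' : Integrable g m')
    {ε : ℝ} (h0 : 0 ≤ ε) (h1 : ε ≤ 1) :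
    ∫ a, g a ∂(comb ε m m') = (1 - ε) • (∫ a, g a ∂m) + ε • ∫ a, g a ∂m' := by
  rw [comb, integral_add_measure (hgm.smul_measure ENNReal.ofReal_ne_top)
      (hgm'.smul_measure ENNReal.ofReal_ne_top),
    integral_smul_measure, integral_smul_measure, ENNReal.toReal_ofReal (by linarith),
    ENNReal.toReal_ofReal h0]

/-- If `f : 𝔠 → ℝ^d` admits a flat derivative, then `ε ↦ f(m^ε)` is continuous on `[0,1]`,
differentiable on `(0,1)` with derivative `∫ δf/δm(m^ε,·) d(m'−m)`, and (under an
integrability assumption) the fundamental theorem of calculus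
`f(m') − f(m) = ∫₀¹ ∫ δf/δm(m^ε,a) d(m'−m)(a) dε` holds. -/
theorem stmt7 {A : Type*} [MetricSpace A] [TopologicalSpace.SeparableSpace A]
    [MeasurableSpace A] [BorelSpace A] {d : ℕ}
    (C : Set (Measure A))
    (hprob : ∀ m ∈ C, IsProbabilityMeasure m)
    (hCconv : ∀ m ∈ C, ∀ m' ∈ C, ∀ ε ∈ Set.Icc (0 : ℝ) 1, comb ε m m' ∈ C)
    (f : Measure A → (Fin d → ℝ))
    (Df : Measure A → A → (Fin d → ℝ))
    (hmeas : Measurable (Function.uncurry Df))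
    (hint : ∀ m ∈ C, ∀ m' ∈ C, Integrable (Df m) m')
    (hlim : ∀ m ∈ C, ∀ m' ∈ C,
      Tendsto (fun ε : ℝ => ε⁻¹ • (f (comb ε m m') - f m)) (𝓝[>] (0 : ℝ))
        (𝓝 (intDiffV (Df m) m' m)))
    (hzero : ∀ m ∈ C, ∫ a, Df m a ∂m = 0)
    (m : Measure A) (hm : m ∈ C) (m' : Measure A) (hm' : m' ∈ C) :
    ContinuousOn (fun ε : ℝ => f (comb ε m m')) (Set.Icc 0 1) ∧
    (∀ ε ∈ Set.Ioo (0 : ℝ) 1,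
      HasDerivAt (fun t : ℝ => f (comb t m m'))
        (intDiffV (Df (comb ε m m')) m' m) ε) ∧
    (IntervalIntegrable (fun ε : ℝ => intDiffV (Df (comb ε m m')) m' m)
        MeasureTheory.volume 0 1 →
      f m' - f m = ∫ ε in (0 : ℝ)..1, intDiffV (Df (comb ε m m')) m' m) := by
  set g : ℝ → (Fin d → ℝ) := fun t => f (comb t m m') with hg
  -- membership of convex combinations
  have hmemC : ∀ ε ∈ Set.Icc (0 : ℝ) 1, comb ε m m' ∈ C := hCconv m hm m' hm'
  -- derivative claim
  have hderiv : ∀ ε ∈ Set.Ioo (0 : ℝ) 1,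
      HasDerivAt g (intDiffV (Df (comb ε m m')) m' m) ε := by
    intro ε hε
    obtain ⟨hε0, hε1⟩ := hε
    set μ := comb ε m m' with hμdef
    have hμC : μ ∈ C := hmemC ε ⟨hε0.le, hε1.le⟩
    set D : Fin d → ℝ := intDiffV (Df μ) m' m with hD
    have hμint : ∫ a, Df μ a ∂μ
        = (1 - ε) • (∫ a, Df μ a ∂m) + ε • ∫ a, Df μ a ∂m' :=
      integral_comb (hint μ hμC m hm) (hint μ hμC m' hm') hε0.le hε1.le
    have keyR : intDiffV (Df μ) m' μ = (1 - ε) • D := by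
      rw [hD, intDiffV, intDiffV, hμint]; module
    have keyL : intDiffV (Df μ) m μ = (-ε) • D := by
      rw [hD, intDiffV, intDiffV, hμint]; module
    rw [hasDerivAt_iff_tendsto_slope, ← nhdsLT_sup_nhdsGT, tendsto_sup]
    constructor
    · -- left derivative
      have hσ : Tendsto (fun t : ℝ => (ε - t) / ε) (𝓝[<] ε) (𝓝[>] (0 : ℝ)) := by
        apply tendsto_nhdsWithin_of_tendsto_nhds_of_eventually_within
        · have : Tendsto (fun t : ℝ => (ε - t) / ε) (𝓝 ε) (𝓝 ((ε - ε) / ε)) := by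
            exact (tendsto_const_nhds.sub tendsto_id).div_const ε
          simpa using this.mono_left nhdsWithin_le_nhds
        · filter_upwards [self_mem_nhdsWithin] with t ht
          exact div_pos (sub_pos.2 (Set.mem_Iio.1 ht)) hε0
      have h1 := (hlim μ hμC m hm).comp hσ
      have h2 := h1.const_smul (-ε⁻¹)
      rw [keyL, smul_smul] at h2
      have : (-ε⁻¹) * (-ε) = 1 := by field_simp
      rw [this, one_smul] at h2
      refine h2.congr' ?_
      filter_upwards [Ioo_mem_nhdsLT_of_mem (Set.mem_Ioc.2 ⟨hε0, le_refl ε⟩)] with t ht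
      obtain ⟨ht0, htε⟩ := ht
      have hs0 : 0 ≤ (ε - t) / ε := div_nonneg (by linarith) hε0.le
      have hs1 : (ε - t) / ε ≤ 1 := by rw [div_le_one hε0]; linarith
      have hcc : comb ((ε - t) / ε) μ m = comb t m m' := by
        rw [hμdef, comb_comb_left hε0.le hε1.le hs0 hs1]
        congr 1; field_simp; ring
      have hsc : -ε⁻¹ * ((ε - t) / ε)⁻¹ = (t - ε)⁻¹ := by
        rw [inv_div, neg_mul, mul_div_assoc', inv_mul_cancel₀ (ne_of_gt hε0), one_div,
          ← inv_neg, neg_sub]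
      simp only [Function.comp_apply, hcc]
      rw [smul_smul, hsc, slope_def_module]
    · -- right derivative
      have hσ : Tendsto (fun t : ℝ => (t - ε) / (1 - ε)) (𝓝[>] ε) (𝓝[>] (0 : ℝ)) := by
        apply tendsto_nhdsWithin_of_tendsto_nhds_of_eventually_within
        · have : Tendsto (fun t : ℝ => (t - ε) / (1 - ε)) (𝓝 ε) (𝓝 ((ε - ε) / (1 - ε))) := by
            exact (tendsto_id.sub tendsto_const_nhds).div_const (1 - ε)
          simpa using this.mono_left nhdsWithin_le_nhds
        · filter_upwards [self_mem_nhdsWithin] with t ht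
          exact div_pos (sub_pos.2 (Set.mem_Ioi.1 ht)) (by linarith)
      have h1 := (hlim μ hμC m' hm').comp hσ
      have h2 := h1.const_smul (1 - ε)⁻¹
      rw [keyR, smul_smul, inv_mul_cancel₀ (by linarith : (1:ℝ) - ε ≠ 0), one_smul] at h2
      refine h2.congr' ?_
      filter_upwards [Ioo_mem_nhdsGT_of_mem (Set.mem_Ico.2 ⟨le_refl ε, hε1⟩)] with t ht
      obtain ⟨htε, ht1⟩ := ht
      have hs0 : 0 ≤ (t - ε) / (1 - ε) := div_nonneg (by linarith) (by linarith)
      have hs1 : (t - ε) / (1 - ε) ≤ 1 := by rw [div_le_one (by linarith)]; linarith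
      have hcc : comb ((t - ε) / (1 - ε)) μ m' = comb t m m' := by
        rw [hμdef, comb_comb_right hε0.le hε1.le hs0 hs1]
        congr 1
        rw [div_mul_eq_mul_div, mul_div_assoc, div_self (by linarith : (1:ℝ) - ε ≠ 0),
          mul_one]
        ring
      have hsc : (1 - ε)⁻¹ * ((t - ε) / (1 - ε))⁻¹ = (t - ε)⁻¹ := by
        rw [inv_div, mul_div_assoc', inv_mul_cancel₀ (by linarith : (1:ℝ) - ε ≠ 0), one_div]
      simp only [Function.comp_apply, hcc]
      rw [smul_smul, hsc, slope_def_module]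
  -- right-continuity at the left endpoint, in general form
  have haux : ∀ p ∈ C, ∀ q ∈ C, Tendsto (fun s : ℝ => f (comb s p q)) (𝓝[>] (0 : ℝ))
      (𝓝 (f p)) := by
    intro p hp q hq
    have H := hlim p hp q hq
    have hid : Tendsto (fun s : ℝ => s) (𝓝[>] (0:ℝ)) (𝓝 0) :=
      tendsto_id.mono_left nhdsWithin_le_nhds
    have h2 : Tendsto (fun s : ℝ => s • (s⁻¹ • (f (comb s p q) - f p))) (𝓝[>] (0:ℝ))
        (𝓝 ((0:ℝ) • intDiffV (Df p) q p)) := hid.smul H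
    rw [zero_smul] at h2
    have h3 : Tendsto (fun s : ℝ => f (comb s p q) - f p) (𝓝[>] (0:ℝ)) (𝓝 0) := by
      refine h2.congr' ?_
      filter_upwards [self_mem_nhdsWithin] with s hs
      rw [smul_smul, mul_inv_cancel₀ (ne_of_gt hs), one_smul]
    have h4 := h3.add_const (f p)
    simpa using h4
  have hcont : ContinuousOn g (Set.Icc 0 1) := by
    intro x hx
    rcases eq_or_lt_of_le hx.1 with h0 | h0
    · -- x = 0
      subst h0
      have hto : Tendsto g (𝓝[>] (0:ℝ)) (𝓝 (g 0)) := by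
        have := haux m hm m' hm'
        simpa [hg, comb_zero] using this
      have : Tendsto g (𝓝[Set.Ici (0:ℝ)] 0) (𝓝 (g 0)) := by
        rw [show Set.Ici (0:ℝ) = insert 0 (Set.Ioi 0) by
            rw [Set.Ioi_insert], nhdsWithin_insert, tendsto_sup]
        exact ⟨tendsto_pure_nhds g 0, hto⟩
      exact this.mono_left (nhdsWithin_mono _ Set.Icc_subset_Ici_self)
    rcases eq_or_lt_of_le hx.2 with h1 | h1
    · -- x = 1
      subst h1
      have hto : Tendsto g (𝓝[<] (1:ℝ)) (𝓝 (g 1)) := by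
        have H := haux m' hm' m hm
        have hmap : Tendsto (fun t : ℝ => 1 - t) (𝓝[<] (1:ℝ)) (𝓝[>] (0:ℝ)) := by
          apply tendsto_nhdsWithin_of_tendsto_nhds_of_eventually_within
          · have : Tendsto (fun t : ℝ => 1 - t) (𝓝 (1:ℝ)) (𝓝 (1 - 1)) :=
              tendsto_const_nhds.sub tendsto_id
            simpa using this.mono_left nhdsWithin_le_nhds
          · filter_upwards [self_mem_nhdsWithin] with t ht
            exact sub_pos.2 (Set.mem_Iio.1 ht)
        have h2 := H.comp hmap
        have heq : ∀ t : ℝ, f (comb (1 - t) m' m) = g t := by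
          intro t
          rw [hg]
          congr 1
          rw [comb_symm (1 - t) m m']
          · congr 1; ring
        have h3 : Tendsto g (𝓝[<] (1:ℝ)) (𝓝 (f m')) := by
          refine h2.congr fun t => ?_
          simp only [Function.comp_apply]
          exact heq t
        simpa [hg, comb_one] using h3
      have : Tendsto g (𝓝[Set.Iic (1:ℝ)] 1) (𝓝 (g 1)) := by
        rw [show Set.Iic (1:ℝ) = insert 1 (Set.Iio 1) by
            rw [Set.Iio_insert], nhdsWithin_insert, tendsto_sup]
        exact ⟨tendsto_pure_nhds g 1, hto⟩
      exact this.mono_left (nhdsWithin_mono _ Set.Icc_subset_Iic_self)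
    · exact ((hderiv x ⟨h0, h1⟩).continuousAt).continuousWithinAt
  refine ⟨hcont, hderiv, ?_⟩
  intro hii
  have := intervalIntegral.integral_eq_sub_of_hasDeriv_right_of_le zero_le_one hcont
    (fun x hx => (hderiv x hx).hasDerivWithinAt) hii
  rw [this, hg]
  simp [comb_zero, comb_one]
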